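/- Let K be a commutative ring, let ℓ ≥ 0 and n ≥ 1 be integers, let A be an (ℓ+1)×(ℓ+1) matrix over K, and let c ∈ K. Define the (ℓ+n+1)×(ℓ+n+1) matrix M over K by: M_{i,j} = A_{i,j} for 1 ≤ i, j ≤ ℓ+1; M_{ℓ+i, ℓ+i+1} = 1 for 1 ≤ i ≤ n; M_{ℓ+n+1, j} = A_{ℓ+1, j} for 1 ≤ j ≤ ℓ; M_{ℓ+n+1, ℓ+1} = c; and all other entries equal 0. Then det(I − t·M) = t^n · U(t) + det(I − t·A), where U(t) = det(C(t)) and C(t) is the (ℓ+1)×(ℓ+1) matrix over K[t] whose rows 1 through ℓ agree with those of I − t·A and whose row ℓ+1 is (−t·A_{ℓ+1,1}, …, −t·A_{ℓ+1,ℓ}, −t·c). -/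

import Mathlib

open Polynomial

/-- The `(ℓ+n+1)×(ℓ+n+1)` matrix built from an `(ℓ+1)×(ℓ+1)` matrix `A` and a scalar
`c` (indices here are 0-based; the statement's 1-based indices are shifted by one):
the upper-left `(ℓ+1)×(ℓ+1)` block is `A`; the entries `M_{ℓ+i-1, ℓ+i}` (0-based) equal
`1` for `1 ≤ i ≤ n`; the last row is `(A_{ℓ,0}, …, A_{ℓ,ℓ-1}, c, 0, …, 0)`; all other
entries vanish. -/
def combMatrix {K : Type*} [CommRing K] (ℓ n : ℕ)
    (A : Matrix (Fin (ℓ + 1)) (Fin (ℓ + 1)) K) (c : K) :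
    Matrix (Fin (ℓ + n + 1)) (Fin (ℓ + n + 1)) K := fun i j =>
  if hi : (i : ℕ) < ℓ + 1 then
    if hj : (j : ℕ) < ℓ + 1 then A ⟨i, hi⟩ ⟨j, hj⟩
    else if (j : ℕ) = (i : ℕ) + 1 then 1 else 0
  else if (i : ℕ) < ℓ + n then
    (if (j : ℕ) = (i : ℕ) + 1 then 1 else 0)
  else
    if hj : (j : ℕ) < ℓ then A ⟨ℓ, Nat.lt_succ_self ℓ⟩ ⟨j, by omega⟩
    else if (j : ℕ) = ℓ then c else 0

/-- The `(ℓ+1)×(ℓ+1)` matrix over `K[t]` whose first `ℓ` rows agree with those of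
`I − t·A` and whose last row is `(−t·A_{ℓ,0}, …, −t·A_{ℓ,ℓ-1}, −t·c)` (0-based
indices). -/
noncomputable def dominantMatrix {K : Type*} [CommRing K] (ℓ : ℕ)
    (A : Matrix (Fin (ℓ + 1)) (Fin (ℓ + 1)) K) (c : K) :
    Matrix (Fin (ℓ + 1)) (Fin (ℓ + 1)) (Polynomial K) := fun i j =>
  if (i : ℕ) < ℓ then
    ((1 : Matrix (Fin (ℓ + 1)) (Fin (ℓ + 1)) (Polynomial K))
      - (X : Polynomial K) • A.map Polynomial.C) i j
  else if (j : ℕ) < ℓ then - ((X : Polynomial K) * Polynomial.C (A ⟨ℓ, Nat.lt_succ_self ℓ⟩ j))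
  else - ((X : Polynomial K) * Polynomial.C c)

namespace RecipAux

variable (K : Type*) [CommRing K]

/-- Row vector appearing as the last row of `dominantMatrix`. -/
noncomputable def vrow (ℓ : ℕ) (A : Matrix (Fin (ℓ + 1)) (Fin (ℓ + 1)) K) (c : K) :
    Fin (ℓ + 1) → Polynomial K := fun k =>
  if (k : ℕ) < ℓ then -((X : Polynomial K) * Polynomial.C (A ⟨ℓ, Nat.lt_succ_self ℓ⟩ k))
  else -((X : Polynomial K) * Polynomial.C c)

noncomputable def Qm (ℓ n : ℕ) : Matrix (Fin (ℓ + 1)) (Fin n) (Polynomial K) :=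
  fun i j => if (i : ℕ) = ℓ ∧ (j : ℕ) = 0 then -(X : Polynomial K) else 0

noncomputable def Rm (ℓ n : ℕ) (A : Matrix (Fin (ℓ + 1)) (Fin (ℓ + 1)) K) (c : K) :
    Matrix (Fin n) (Fin (ℓ + 1)) (Polynomial K) :=
  fun a k => if (a : ℕ) = n - 1 then vrow K ℓ A c k else 0

noncomputable def Sm (n : ℕ) : Matrix (Fin n) (Fin n) (Polynomial K) :=
  fun a b => if a = b then 1 else if (b : ℕ) = (a : ℕ) + 1 then -(X : Polynomial K) else 0

noncomputable def Tm (n : ℕ) : Matrix (Fin n) (Fin n) (Polynomial K) :=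
  fun a b => if (a : ℕ) ≤ (b : ℕ) then (X : Polynomial K) ^ ((b : ℕ) - (a : ℕ)) else 0

lemma Sm_mul_Tm (n : ℕ) : Sm K n * Tm K n = 1 := by
  funext a c
  rw [Matrix.mul_apply]
  have hsplit : ∀ b : Fin n, Sm K n a b * Tm K n b c
      = (if a = b then Tm K n b c else 0)
        + (if (b : ℕ) = (a : ℕ) + 1 then -(X : Polynomial K) * Tm K n b c else 0) := by
    intro b
    simp only [Sm]
    by_cases h1 : a = b
    · subst h1
      rw [if_pos rfl, if_pos rfl, if_neg (by omega), one_mul, add_zero]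
    · rw [if_neg h1, if_neg h1, zero_add]
      by_cases h2 : (b : ℕ) = (a : ℕ) + 1
      · rw [if_pos h2, if_pos h2]
      · rw [if_neg h2, if_neg h2, zero_mul]
  rw [Finset.sum_congr rfl (fun b _ => hsplit b), Finset.sum_add_distrib]
  have h1 : (∑ b : Fin n, if a = b then Tm K n b c else 0) = Tm K n a c := by
    simp [Finset.sum_ite_eq]
  rw [h1]
  by_cases h : (a : ℕ) + 1 < n
  · have h2 : (∑ b : Fin n, if (b : ℕ) = (a : ℕ) + 1
        then -(X : Polynomial K) * Tm K n b c else 0)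
        = -(X : Polynomial K) * Tm K n ⟨(a : ℕ) + 1, h⟩ c := by
      rw [Finset.sum_eq_single (⟨(a : ℕ) + 1, h⟩ : Fin n)]
      · rw [if_pos rfl]
      · intro b _ hb
        rw [if_neg (fun hc => hb (Fin.ext hc))]
      · intro hb; exact absurd (Finset.mem_univ _) hb
    rw [h2, Matrix.one_apply]
    simp only [Tm, show (a = c) ↔ ((a : ℕ) = (c : ℕ)) from Fin.ext_iff]
    by_cases hac : (a : ℕ) = (c : ℕ)
    · rw [if_pos hac, if_pos (by omega), if_neg (by omega), hac, Nat.sub_self, pow_zero,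
        mul_zero, add_zero]
    · rw [if_neg hac]
      by_cases hle : (a : ℕ) ≤ (c : ℕ)
      · rw [if_pos hle, if_pos (by omega : (a : ℕ) + 1 ≤ (c : ℕ))]
        have hc1 : (c : ℕ) - (a : ℕ) = ((c : ℕ) - ((a : ℕ) + 1)) + 1 := by omega
        rw [hc1, pow_succ]
        ring
      · rw [if_neg hle, if_neg (by omega), mul_zero, add_zero]
  · have h2 : (∑ b : Fin n, if (b : ℕ) = (a : ℕ) + 1
        then -(X : Polynomial K) * Tm K n b c else 0) = 0 := by
      refine Finset.sum_eq_zero fun b _ => ?_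
      rw [if_neg (by have := b.isLt; omega)]
    rw [h2, add_zero, Matrix.one_apply]
    simp only [Tm, show (a = c) ↔ ((a : ℕ) = (c : ℕ)) from Fin.ext_iff]
    have := a.isLt; have := c.isLt
    by_cases hac : (a : ℕ) = (c : ℕ)
    · rw [if_pos hac, if_pos (by omega), hac, Nat.sub_self, pow_zero]
    · rw [if_neg hac, if_neg (by omega)]

lemma det_Sm (n : ℕ) : (Sm K n).det = 1 := by
  rw [Matrix.det_of_upperTriangular]
  · refine Finset.prod_eq_one fun a _ => ?_
    simp [Sm]
  · intro i j hij
    simp only [Sm]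
    rw [if_neg (by exact fun h => by subst h; exact lt_irrefl _ hij),
      if_neg (by have : (j : ℕ) < (i : ℕ) := hij; omega)]

end RecipAux

open RecipAux in
/-- Proposition 3.6(2): `det(I − t·M) = t^n · U(t) + det(I − t·A)`, where
`U(t) = det(C(t))` is independent of `n`. -/
theorem reciprocal_charpoly_combMatrix {K : Type*} [CommRing K] (ℓ n : ℕ) (hn : 1 ≤ n)
    (A : Matrix (Fin (ℓ + 1)) (Fin (ℓ + 1)) K) (c : K) :
    ((1 : Matrix (Fin (ℓ + n + 1)) (Fin (ℓ + n + 1)) (Polynomial K))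
        - (X : Polynomial K) • (combMatrix ℓ n A c).map Polynomial.C).det
      = X ^ n * (dominantMatrix ℓ A c).det
        + ((1 : Matrix (Fin (ℓ + 1)) (Fin (ℓ + 1)) (Polynomial K))
            - (X : Polynomial K) • A.map Polynomial.C).det := by
  classical
  set B : Matrix (Fin (ℓ + n + 1)) (Fin (ℓ + n + 1)) (Polynomial K) :=
    (1 : Matrix (Fin (ℓ + n + 1)) (Fin (ℓ + n + 1)) (Polynomial K))
      - (X : Polynomial K) • (combMatrix ℓ n A c).map Polynomial.C with hBdef
  set P : Matrix (Fin (ℓ + 1)) (Fin (ℓ + 1)) (Polynomial K) :=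
    (1 : Matrix (Fin (ℓ + 1)) (Fin (ℓ + 1)) (Polynomial K))
      - (X : Polynomial K) • A.map Polynomial.C with hPdef
  -- the reindexing equivalence
  let e : Fin (ℓ + 1) ⊕ Fin n ≃ Fin (ℓ + n + 1) :=
    finSumFinEquiv.trans (finCongr (by omega))
  have he1 : ∀ i : Fin (ℓ + 1), ((e (Sum.inl i) : Fin (ℓ + n + 1)) : ℕ) = (i : ℕ) := by
    intro i; simp [e]
  have he2 : ∀ a : Fin n, ((e (Sum.inr a) : Fin (ℓ + n + 1)) : ℕ) = ℓ + 1 + (a : ℕ) := by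
    intro a; simp [e]
  -- B as a block matrix
  have hB : Matrix.fromBlocks P (Qm K ℓ n) (Rm K ℓ n A c) (Sm K n) = B.submatrix e e := by
    funext i j
    rcases i with i | a <;> rcases j with j | b <;>
      simp only [Matrix.fromBlocks_apply₁₁, Matrix.fromBlocks_apply₁₂,
        Matrix.fromBlocks_apply₂₁, Matrix.fromBlocks_apply₂₂, Matrix.submatrix_apply, hBdef,
        Matrix.sub_apply, Matrix.smul_apply, Matrix.map_apply, Matrix.one_apply, smul_eq_mul,
        hPdef, Qm, Rm, Sm, vrow, combMatrix]
    · -- (inl, inl)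
      have hi := he1 i; have hj := he1 j
      have hilt := i.isLt; have hjlt := j.isLt
      rw [dif_pos (show ((e (Sum.inl i)) : ℕ) < ℓ + 1 by omega),
        dif_pos (show ((e (Sum.inl j)) : ℕ) < ℓ + 1 by omega)]
      have hij : (e (Sum.inl i) = e (Sum.inl j)) ↔ (i = j) := by
        rw [Fin.ext_iff, Fin.ext_iff, hi, hj]
      by_cases hc : i = j
      · rw [if_pos hc, if_pos (hij.mpr hc)]
        congr 3
      · rw [if_neg hc, if_neg (fun hh => hc (hij.mp hh))]
        congr 3
    · -- (inl, inr)
      have hi := he1 i; have hj := he2 b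
      have hilt := i.isLt
      rw [dif_pos (show ((e (Sum.inl i)) : ℕ) < ℓ + 1 by omega),
        dif_neg (show ¬ ((e (Sum.inr b)) : ℕ) < ℓ + 1 by omega),
        if_neg (show ¬ e (Sum.inl i) = e (Sum.inr b) by rw [Fin.ext_iff, hi, hj]; omega)]
      by_cases h : (i : ℕ) = ℓ ∧ (b : ℕ) = 0
      · rw [if_pos h,
          if_pos (show ((e (Sum.inr b)) : ℕ) = ((e (Sum.inl i)) : ℕ) + 1 by
            rw [hi, hj]; omega),
          map_one, mul_one, zero_sub]
      · rw [if_neg h,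
          if_neg (show ¬ ((e (Sum.inr b)) : ℕ) = ((e (Sum.inl i)) : ℕ) + 1 by
            rw [hi, hj]; omega),
          map_zero, mul_zero, sub_zero]
    · -- (inr, inl)
      have hi := he2 a; have hj := he1 j
      have halt := a.isLt; have hjlt := j.isLt
      rw [dif_neg (show ¬ ((e (Sum.inr a)) : ℕ) < ℓ + 1 by omega),
        if_neg (show ¬ e (Sum.inr a) = e (Sum.inl j) by rw [Fin.ext_iff, hi, hj]; omega)]
      by_cases h : (a : ℕ) = n - 1
      · rw [if_pos h, if_neg (show ¬ ((e (Sum.inr a)) : ℕ) < ℓ + n by rw [hi]; omega)]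
        by_cases hk : (j : ℕ) < ℓ
        · rw [if_pos hk, dif_pos (show ((e (Sum.inl j)) : ℕ) < ℓ by rw [hj]; omega), zero_sub]
          congr 3
        · rw [if_neg hk, dif_neg (show ¬ ((e (Sum.inl j)) : ℕ) < ℓ by rw [hj]; omega),
            if_pos (show ((e (Sum.inl j)) : ℕ) = ℓ by rw [hj]; omega), zero_sub]
      · rw [if_neg h, if_pos (show ((e (Sum.inr a)) : ℕ) < ℓ + n by rw [hi]; omega),
          if_neg (show ¬ ((e (Sum.inl j)) : ℕ) = ((e (Sum.inr a)) : ℕ) + 1 by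
            rw [hi, hj]; omega),
          map_zero, mul_zero, sub_zero]
    · -- (inr, inr)
      have hi := he2 a; have hj := he2 b
      have halt := a.isLt; have hblt := b.isLt
      rw [dif_neg (show ¬ ((e (Sum.inr a)) : ℕ) < ℓ + 1 by omega)]
      have hiff : (e (Sum.inr a) = e (Sum.inr b)) ↔ (a = b) := by
        rw [Fin.ext_iff, Fin.ext_iff, hi, hj]
        omega
      by_cases hab : a = b
      · subst hab
        rw [if_pos rfl, if_pos (hiff.mpr rfl)]
        by_cases h2 : ((e (Sum.inr a)) : ℕ) < ℓ + n
        · rw [if_pos h2,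
            if_neg (show ¬ ((e (Sum.inr a)) : ℕ) = ((e (Sum.inr a)) : ℕ) + 1 by omega),
            map_zero, mul_zero, sub_zero]
        · rw [if_neg h2, dif_neg (show ¬ ((e (Sum.inr a)) : ℕ) < ℓ by rw [hi]; omega),
            if_neg (show ¬ ((e (Sum.inr a)) : ℕ) = ℓ by rw [hi]; omega),
            map_zero, mul_zero, sub_zero]
      · rw [if_neg hab, if_neg (fun hh => hab (hiff.mp hh))]
        by_cases h : (b : ℕ) = (a : ℕ) + 1
        · rw [if_pos h, if_pos (show ((e (Sum.inr a)) : ℕ) < ℓ + n by rw [hi]; omega),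
            if_pos (show ((e (Sum.inr b)) : ℕ) = ((e (Sum.inr a)) : ℕ) + 1 by
              rw [hi, hj]; omega),
            map_one, mul_one, zero_sub]
        · rw [if_neg h]
          by_cases h2 : ((e (Sum.inr a)) : ℕ) < ℓ + n
          · rw [if_pos h2,
              if_neg (show ¬ ((e (Sum.inr b)) : ℕ) = ((e (Sum.inr a)) : ℕ) + 1 by
                rw [hi, hj]; omega),
              map_zero, mul_zero, sub_zero]
          · rw [if_neg h2, dif_neg (show ¬ ((e (Sum.inr b)) : ℕ) < ℓ by rw [hj]; omega),
              if_neg (show ¬ ((e (Sum.inr b)) : ℕ) = ℓ by rw [hj]; omega),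
              map_zero, mul_zero, sub_zero]
  -- invertibility of S
  haveI : Invertible (Sm K n) := invertibleOfRightInverse (Sm K n) _ (Sm_mul_Tm K n)
  have hinv : ⅟(Sm K n) = Tm K n := invOf_eq_right_inv (Sm_mul_Tm K n)
  -- compute the Schur complement
  have hQT : ∀ (i : Fin (ℓ + 1)) (b : Fin n), (Qm K ℓ n * Tm K n) i b
      = if (i : ℕ) = ℓ then -(X : Polynomial K) * X ^ (b : ℕ) else 0 := by
    intro i b
    rw [Matrix.mul_apply, Finset.sum_eq_single (⟨0, by omega⟩ : Fin n)]
    · simp only [Qm, Tm]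
      by_cases h : (i : ℕ) = ℓ
      · simp [h]
      · simp [h]
    · intro a _ ha
      simp only [Qm]
      rw [if_neg (fun hc => ha (Fin.ext hc.2)), zero_mul]
    · intro hb; exact absurd (Finset.mem_univ _) hb
  have hQTR : ∀ (i k : Fin (ℓ + 1)), (Qm K ℓ n * Tm K n * Rm K ℓ n A c) i k
      = if (i : ℕ) = ℓ then -((X : Polynomial K) ^ n * vrow K ℓ A c k) else 0 := by
    intro i k
    rw [Matrix.mul_apply, Finset.sum_eq_single (⟨n - 1, by omega⟩ : Fin n)]
    · rw [hQT]
      simp only [Rm]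
      rw [if_pos trivial]
      by_cases h : (i : ℕ) = ℓ
      · rw [if_pos h, if_pos h]
        have hX : (X : Polynomial K) ^ n = X * X ^ (n - 1) := by
          conv_lhs => rw [show n = (n - 1) + 1 by omega]
          rw [pow_succ]; ring
        rw [hX]
        ring
      · rw [if_neg h, if_neg h, zero_mul]
    · intro b _ hb
      simp only [Rm]
      rw [if_neg (fun hc => hb (Fin.ext (by simpa using hc))), mul_zero]
    · intro hb; exact absurd (Finset.mem_univ _) hb
  have hSchur : P - Qm K ℓ n * ⅟(Sm K n) * Rm K ℓ n A c
      = P.updateRow ⟨ℓ, Nat.lt_succ_self ℓ⟩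
          (P ⟨ℓ, Nat.lt_succ_self ℓ⟩ + (X : Polynomial K) ^ n • vrow K ℓ A c) := by
    funext i k
    rw [Matrix.updateRow_apply, Matrix.sub_apply, hinv, hQTR]
    by_cases h : (i : ℕ) = ℓ
    · have h' : i = (⟨ℓ, Nat.lt_succ_self ℓ⟩ : Fin (ℓ + 1)) := Fin.ext h
      rw [if_pos h', if_pos h, h']
      simp only [Pi.add_apply, Pi.smul_apply, smul_eq_mul]
      ring
    · have h' : ¬ i = (⟨ℓ, Nat.lt_succ_self ℓ⟩ : Fin (ℓ + 1)) :=
        fun hh => h (congrArg Fin.val hh)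
      rw [if_neg h', if_neg h, sub_zero]
  have hdom : P.updateRow ⟨ℓ, Nat.lt_succ_self ℓ⟩ (vrow K ℓ A c) = dominantMatrix ℓ A c := by
    funext i k
    rw [Matrix.updateRow_apply]
    simp only [dominantMatrix]
    by_cases h : (i : ℕ) = ℓ
    · rw [if_pos (Fin.ext h : i = (⟨ℓ, Nat.lt_succ_self ℓ⟩ : Fin (ℓ + 1))),
        if_neg (show ¬ (i : ℕ) < ℓ by omega)]
      rfl
    · rw [if_neg (show ¬ i = (⟨ℓ, Nat.lt_succ_self ℓ⟩ : Fin (ℓ + 1)) from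
          fun hh => h (congrArg Fin.val hh)),
        if_pos (show (i : ℕ) < ℓ by have := i.isLt; omega)]
  calc B.det = (B.submatrix e e).det := (Matrix.det_submatrix_equiv_self e B).symm
    _ = (Matrix.fromBlocks P (Qm K ℓ n) (Rm K ℓ n A c) (Sm K n)).det := by rw [hB]
    _ = (Sm K n).det * (P - Qm K ℓ n * ⅟(Sm K n) * Rm K ℓ n A c).det :=
        Matrix.det_fromBlocks₂₂ _ _ _ _
    _ = X ^ n * (dominantMatrix ℓ A c).det + P.det := by
        rw [det_Sm, one_mul, hSchur, Matrix.det_updateRow_add, Matrix.updateRow_eq_self,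
          Matrix.det_updateRow_smul, hdom, add_comm]
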